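/- Let M ≥ 1, let z₁, …, z_M ∈ ℂ be pairwise distinct, γ₁, …, γ_M ∈ ℝ with Σ_k γ_k ≠ 0, and 𝛀 ∈ ℂ with 𝛀 ≠ 0. Set z_c := (Σ_k γ_k z_k)/(Σ_k γ_k) and define 𝒱̃_k := Σ_{j≠k} γ_j/(2πi (z_k − z_j)) + i𝛀·conj(z_k − z_c) for k = 1, …, M. Then the following are equivalent: (i) 𝒱_k(Λ) = 0 for all k; (ii) 𝒱̃_k = 0 for all k and z_c = 0. Moreover, proving (i) ⇒ (ii) uses the identity Σ_k γ_k 𝒱_k(Λ) = i𝛀·conj(Σ_k γ_k z_k), which holds for any such configuration. -/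
import Mathlib


open Real Complex ComplexConjugate

/-- **Normalizing the collapse point to the origin.**  Let `M ≥ 1`, let `z₁, …, z_M ∈ ℂ` be
pairwise distinct, `γ₁, …, γ_M ∈ ℝ` with `Σ_k γ_k ≠ 0`, and `𝛀 ∈ ℂ` with `𝛀 ≠ 0`.  Set
`z_c = (Σ_k γ_k z_k)/(Σ_k γ_k)`,
`𝒱_k = Σ_{j≠k} γ_j/(2πi (z_k − z_j)) + i𝛀·conj(z_k)`, and
`𝒱̃_k = Σ_{j≠k} γ_j/(2πi (z_k − z_j)) + i𝛀·conj(z_k − z_c)`.  Then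
`(∀ k, 𝒱_k = 0) ↔ ((∀ k, 𝒱̃_k = 0) ∧ z_c = 0)`; moreover the identity
`Σ_k γ_k 𝒱_k = i𝛀·conj(Σ_k γ_k z_k)` holds. -/
theorem selfSimilar_collapse_normalization
    (M : ℕ) (hM : 1 ≤ M) (z : Fin M → ℂ)
    (hz : ∀ j k : Fin M, j ≠ k → z j ≠ z k)
    (γ : Fin M → ℝ) (hγ : ∑ k, γ k ≠ 0) (Om : ℂ) (hOm : Om ≠ 0)
    (zc : ℂ) (hzc : zc = (∑ k, (γ k : ℂ) * z k) / (∑ k, (γ k : ℂ)))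
    (V Vt : Fin M → ℂ)
    (hV : ∀ k, V k =
      (∑ j ∈ Finset.univ.erase k, (γ j : ℂ) / (2 * (π : ℂ) * I * (z k - z j)))
        + I * Om * conj (z k))
    (hVt : ∀ k, Vt k =
      (∑ j ∈ Finset.univ.erase k, (γ j : ℂ) / (2 * (π : ℂ) * I * (z k - z j)))
        + I * Om * conj (z k - zc)) :
    ((∀ k, V k = 0) ↔ ((∀ k, Vt k = 0) ∧ zc = 0)) ∧
      ∑ k, (γ k : ℂ) * V k = I * Om * conj (∑ k, (γ k : ℂ) * z k) := by
  -- antisymmetric interaction sum vanishes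
  set f : Fin M → Fin M → ℂ :=
    fun k j => (γ k : ℂ) * ((γ j : ℂ) / (2 * (π : ℂ) * I * (z k - z j))) with hf
  have hanti : ∀ k j, f j k = - f k j := by
    intro k j
    simp only [hf]
    rw [show (2 * (π : ℂ) * I * (z j - z k)) = -(2 * (π : ℂ) * I * (z k - z j)) by ring,
      div_neg]
    ring
  have hswap : (∑ k, ∑ j ∈ Finset.univ.erase k, f k j)
      = ∑ k, ∑ j ∈ Finset.univ.erase k, f j k := by
    exact Finset.sum_comm' (fun x y => by
      simp only [Finset.mem_univ, Finset.mem_erase, true_and, and_true, ne_eq]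
      exact ⟨fun h => h ∘ Eq.symm, fun h => h ∘ Eq.symm⟩)
  have hS : (∑ k, ∑ j ∈ Finset.univ.erase k, f k j) = 0 := by
    have h2 : (∑ k, ∑ j ∈ Finset.univ.erase k, f k j)
        = - ∑ k, ∑ j ∈ Finset.univ.erase k, f k j := by
      nth_rewrite 1 [hswap]
      rw [← Finset.sum_neg_distrib]
      apply Finset.sum_congr rfl
      intro k _
      rw [← Finset.sum_neg_distrib]
      exact Finset.sum_congr rfl fun j _ => hanti k j
    linear_combination h2 / 2
  -- the sum identity
  have hsum : ∑ k, (γ k : ℂ) * V k = I * Om * conj (∑ k, (γ k : ℂ) * z k) := by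
    have : ∑ k, (γ k : ℂ) * V k
        = (∑ k, ∑ j ∈ Finset.univ.erase k, f k j)
          + I * Om * ∑ k, (γ k : ℂ) * conj (z k) := by
      rw [Finset.mul_sum, ← Finset.sum_add_distrib]
      apply Finset.sum_congr rfl
      intro k _
      rw [hV k, mul_add, Finset.mul_sum]
      congr 1
      ring
    rw [this, hS, zero_add, map_sum]
    congr 1
    apply Finset.sum_congr rfl
    intro k _
    rw [map_mul, Complex.conj_ofReal]
  refine ⟨?_, hsum⟩
  constructor
  · intro h
    have hz0 : (∑ k, (γ k : ℂ) * z k) = 0 := by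
      have h0 : I * Om * conj (∑ k, (γ k : ℂ) * z k) = 0 := by
        rw [← hsum]; simp [h]
      have := mul_eq_zero.mp h0
      rcases this with h1 | h2
      · rcases mul_eq_zero.mp h1 with h3 | h4
        · exact absurd h3 I_ne_zero
        · exact absurd h4 hOm
      · have := congrArg (starRingEnd ℂ) h2
        simpa using this
    have hc : zc = 0 := by rw [hzc, hz0, zero_div]
    refine ⟨fun k => ?_, hc⟩
    rw [hVt k, hc, sub_zero, ← hV k]; exact h k
  · rintro ⟨h, hc⟩ k
    rw [hV k, show conj (z k) = conj (z k - zc) by rw [hc, sub_zero], ← hVt k]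
    exact h k
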